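/- Let p ≥ 2 and fix t with 0 < t < 2/(p-1). There exist a natural number m₀ ≥ 1 and, for each integer m ≥ m₀, a constant C > 0 depending only on p, t, m (in particular independent of Ω, f and u) with the following property: for every integer n ≥ 1, every open set Ω ⊆ ℝⁿ, every continuous f : Ω → ℝ with f ≥ 0, and every u ∈ C¹(Ω) which is a weak solution of -Δ_p u = f(x) e^u on Ω and is stable on Ω, one has, for every C¹ function φ : ℝⁿ → ℝ with compact support in Ω and 0 ≤ φ ≤ 1: ∫_Ω f e^{(2t+1)u} φ^{pm} dx ≤ C ∫_Ω f^{-2t} |∇φ|^{p(2t+1)} dx, where both sides are Lebesgue integrals with values in [0,∞] (the right-hand side may be +∞ where f vanishes). -/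

import Mathlib

open Real MeasureTheory

namespace MoserAux

lemma rp_mul_sq {p a : ℝ} (hp : 2 ≤ p) (ha : 0 ≤ a) : a ^ (p-2) * a ^ (2:ℕ) = a ^ p := by
  rcases ha.eq_or_lt with h | h
  · rw [← h]
    rw [Real.zero_rpow (by positivity : p ≠ 0)]
    rcases eq_or_lt_of_le hp with h2 | h2
    · rw [← h2]; norm_num
    · rw [Real.zero_rpow (by intro hc; linarith [sub_eq_zero.mp hc] : p - 2 ≠ 0)]; ring
  · rw [← Real.rpow_natCast a 2, ← Real.rpow_add h]; norm_num

lemma rp_mul_one {p a : ℝ} (hp : 2 ≤ p) (ha : 0 ≤ a) : a ^ (p-2) * a = a ^ (p-1) := by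
  rcases ha.eq_or_lt with h | h
  · rw [← h, mul_zero, Real.zero_rpow (by intro hc; linarith [sub_eq_zero.mp hc] : p - 1 ≠ 0)]
  · calc a ^ (p-2) * a = a ^ (p-2) * a ^ (1:ℝ) := by rw [Real.rpow_one]
      _ = a ^ (p-2+1) := (Real.rpow_add h _ _).symm
      _ = a ^ (p-1) := by rw [show p-2+1 = p-1 by ring]

lemma rp1_mul_one {p a : ℝ} (hp : 2 ≤ p) (ha : 0 ≤ a) : a ^ (p-1) * a = a ^ p := by
  rcases ha.eq_or_lt with h | h
  · rw [← h, mul_zero, Real.zero_rpow (by positivity : p ≠ 0)]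
  · calc a ^ (p-1) * a = a ^ (p-1) * a ^ (1:ℝ) := by rw [Real.rpow_one]
      _ = a ^ (p-1+1) := (Real.rpow_add h _ _).symm
      _ = a ^ p := by rw [show p-1+1 = p by ring]

lemma young1 {p s a b : ℝ} (hp : 2 ≤ p) (hs : 0 < s) (ha : 0 ≤ a) (hb : 0 ≤ b) :
    a ^ (p-1) * b ≤ s * a ^ p + s ^ (1-p) * b ^ p := by
  have hap : (0:ℝ) ≤ a ^ (p-1) := Real.rpow_nonneg ha _
  have hap' : (0:ℝ) ≤ a ^ p := Real.rpow_nonneg ha _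
  have hbp : (0:ℝ) ≤ b ^ p := Real.rpow_nonneg hb _
  have hsp : (0:ℝ) ≤ s ^ (1-p) := Real.rpow_nonneg hs.le _
  rcases le_or_gt b (s * a) with h | h
  · calc a ^ (p-1) * b ≤ a ^ (p-1) * (s * a) := mul_le_mul_of_nonneg_left h hap
      _ = s * (a ^ (p-1) * a) := by ring
      _ = s * a ^ p := by rw [rp1_mul_one hp ha]
      _ ≤ s * a ^ p + s ^ (1-p) * b ^ p := by nlinarith
  · have hb0 : 0 < b := lt_of_le_of_lt (by positivity) h
    have hab : a ≤ b / s := by rw [le_div_iff₀ hs]; nlinarith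
    have h1 : a ^ (p-1) ≤ (b / s) ^ (p-1) :=
      Real.rpow_le_rpow ha hab (by linarith)
    have h2 : a ^ (p-1) * b ≤ (b / s) ^ (p-1) * b :=
      mul_le_mul_of_nonneg_right h1 hb
    have h3 : (b / s) ^ (p-1) * b = s ^ (1-p) * b ^ p := by
      rw [Real.div_rpow hb hs.le]
      rw [div_mul_eq_mul_div, rp1_mul_one hp hb]
      rw [show (1:ℝ) - p = -(p-1) by ring, Real.rpow_neg hs.le]
      ring
    calc a ^ (p-1) * b ≤ s ^ (1-p) * b ^ p := h2.trans h3.le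
      _ ≤ s * a ^ p + s ^ (1-p) * b ^ p := by nlinarith

lemma young2 {p s a b : ℝ} (hp : 2 ≤ p) (hs : 0 < s) (ha : 0 ≤ a) (hb : 0 ≤ b) :
    a ^ (p-2) * b ^ (2:ℕ) ≤ s ^ (2:ℕ) * a ^ p + s ^ (2-p) * b ^ p := by
  have hap : (0:ℝ) ≤ a ^ (p-2) := Real.rpow_nonneg ha _
  have hap' : (0:ℝ) ≤ a ^ p := Real.rpow_nonneg ha _
  have hbp : (0:ℝ) ≤ b ^ p := Real.rpow_nonneg hb _
  have hsp : (0:ℝ) ≤ s ^ (2-p) := Real.rpow_nonneg hs.le _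
  rcases le_or_gt b (s * a) with h | h
  · have h2 : b ^ (2:ℕ) ≤ (s*a) ^ (2:ℕ) := by
      have := mul_self_le_mul_self hb h
      simpa [pow_two] using this
    calc a ^ (p-2) * b ^ (2:ℕ) ≤ a ^ (p-2) * (s*a) ^ (2:ℕ) :=
          mul_le_mul_of_nonneg_left h2 hap
      _ = s ^ (2:ℕ) * (a ^ (p-2) * a ^ (2:ℕ)) := by ring
      _ = s ^ (2:ℕ) * a ^ p := by rw [rp_mul_sq hp ha]
      _ ≤ _ := by nlinarith
  · have hb0 : 0 < b := lt_of_le_of_lt (by positivity) h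
    have hab : a ≤ b / s := by rw [le_div_iff₀ hs]; nlinarith
    have h1 : a ^ (p-2) ≤ (b / s) ^ (p-2) :=
      Real.rpow_le_rpow ha hab (by linarith)
    have h2 : a ^ (p-2) * b ^ (2:ℕ) ≤ (b / s) ^ (p-2) * b ^ (2:ℕ) :=
      mul_le_mul_of_nonneg_right h1 (by positivity)
    have h3 : (b / s) ^ (p-2) * b ^ (2:ℕ) = s ^ (2-p) * b ^ p := by
      rw [Real.div_rpow hb hs.le]
      rw [div_mul_eq_mul_div, rp_mul_sq hp hb]
      rw [show (2:ℝ) - p = -(p-2) by ring, Real.rpow_neg hs.le]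
      ring
    calc a ^ (p-2) * b ^ (2:ℕ) ≤ s ^ (2-p) * b ^ p := h2.trans h3.le
      _ ≤ _ := by nlinarith

end MoserAux


set_option maxHeartbeats 1000000 in
lemma MoserAux2.key_real (p t q ε c₁ c₂ : ℝ) (hp : 2 ≤ p) (ht1 : 0 < t) (ht2 : (p-1)*t < 2)
    (hq : 1 ≤ q) (hε : 0 < ε) (hc₁ : 0 < c₁) (hc₂ : 0 < c₂)
    (hε1 : (p-1)*q^2*ε ≤ (p-1)*t^2/2)
    (hε2 : ε*(abs (1-(p-1)*t)*(2*q) + (p-1)*q^2) ≤ t*(2-(p-1)*t)/2) :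
    ∃ C₃ : ℝ, 0 < C₃ ∧ ∀ A B D E F G : ℝ, 0 ≤ A → 0 ≤ B → 0 ≤ E → 0 ≤ F → 0 ≤ G →
      2*t*B + 2*q*D = A →
      A ≤ (p-1)*(t^2*B + 2*t*q*D + q^2*F) →
      D ≤ E →
      E ≤ ε*B + c₁*G →
      F ≤ ε*B + c₂*G →
      A ≤ C₃ * G := by
  have hp1 : (1:ℝ) ≤ p - 1 := by linarith
  have hq0 : 0 < q := by linarith
  have hβ : 0 < (p-1)*t^2 := by positivity
  have hσ : 0 < t*(2-(p-1)*t) := by nlinarith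
  rcases le_or_gt 0 (1-(p-1)*t) with hα | hα
  · -- case α ≥ 0
    refine ⟨(2*t+2*q*ε)*(2*(p-1)*q^2*c₂/((p-1)*t^2)) + 2*q*c₁ + 1, by positivity, ?_⟩
    intro A B D E F G hA0 hB0 hE0 hF0 hG0 h1 h2 h3 h4 h5
    have hD : 2*q*D = A - 2*t*B := by linarith
    have e1 : (p-1)*(t^2*B + 2*t*q*D + q^2*F)
        = (p-1)*t^2*B + (p-1)*t*(A - 2*t*B) + (p-1)*q^2*F := by
      rw [show (p-1)*(t^2*B + 2*t*q*D + q^2*F)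
          = (p-1)*t^2*B + (p-1)*t*(2*q*D) + (p-1)*q^2*F by ring, hD]
    have hkey1 : (1-(p-1)*t)*A + ((p-1)*t^2)*B ≤ (p-1)*q^2*F := by nlinarith [h2.trans_eq e1]
    have hF2 : (p-1)*q^2*F ≤ (p-1)*q^2*ε*B + (p-1)*q^2*c₂*G := by
      nlinarith [mul_le_mul_of_nonneg_left h5 (by positivity : (0:ℝ) ≤ (p-1)*q^2)]
    have hm1 : (p-1)*q^2*ε*B ≤ ((p-1)*t^2/2)*B := mul_le_mul_of_nonneg_right hε1 hB0
    have h0A : 0 ≤ (1-(p-1)*t)*A := mul_nonneg hα hA0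
    have hBB : ((p-1)*t^2/2)*B ≤ (p-1)*q^2*c₂*G := by linarith
    have hB1 : B ≤ 2*(p-1)*q^2*c₂/((p-1)*t^2) * G := by
      rw [div_mul_eq_mul_div, le_div_iff₀ hβ]; nlinarith
    have hm2 := mul_le_mul_of_nonneg_left (h3.trans h4) (by positivity : (0:ℝ) ≤ 2*q)
    have hA2 : A ≤ (2*t+2*q*ε)*B + 2*q*c₁*G := by nlinarith [hm2, h1]
    have hm3 := mul_le_mul_of_nonneg_left hB1 (by positivity : (0:ℝ) ≤ 2*t+2*q*ε)
    nlinarith [hm3, hA2, hG0]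
  · -- case α < 0
    have hα2 : 0 < (p-1)*t-1 := by linarith
    have hα' : abs (1-(p-1)*t) = (p-1)*t-1 := by rw [abs_of_neg hα]; ring
    rw [hα'] at hε2
    refine ⟨(2*t+2*q*ε)*(2*(((p-1)*t-1)*(2*q)*c₁ + (p-1)*q^2*c₂)/(t*(2-(p-1)*t))) + 2*q*c₁ + 1,
      by positivity, ?_⟩
    intro A B D E F G hA0 hB0 hE0 hF0 hG0 h1 h2 h3 h4 h5
    have hD : 2*q*D = A - 2*t*B := by linarith
    have e1 : (p-1)*(t^2*B + 2*t*q*D + q^2*F)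
        = (p-1)*t^2*B + (p-1)*t*(A - 2*t*B) + (p-1)*q^2*F := by
      rw [show (p-1)*(t^2*B + 2*t*q*D + q^2*F)
          = (p-1)*t^2*B + (p-1)*t*(2*q*D) + (p-1)*q^2*F by ring, hD]
    have hkey1 : (1-(p-1)*t)*A + ((p-1)*t^2)*B ≤ (p-1)*q^2*F := by nlinarith [h2.trans_eq e1]
    have hm2 := mul_le_mul_of_nonneg_left (h3.trans h4) (by positivity : (0:ℝ) ≤ 2*q)
    have hA2 : A ≤ (2*t+2*q*ε)*B + 2*q*c₁*G := by nlinarith [hm2, h1]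
    have hF2 : (p-1)*q^2*F ≤ (p-1)*q^2*ε*B + (p-1)*q^2*c₂*G := by
      nlinarith [mul_le_mul_of_nonneg_left h5 (by positivity : (0:ℝ) ≤ (p-1)*q^2)]
    have hm3 := mul_le_mul_of_nonneg_left hA2 hα2.le
    have hm4 := mul_le_mul_of_nonneg_right hε2 hB0
    have hBB : (t*(2-(p-1)*t)/2) * B ≤ (((p-1)*t-1)*(2*q)*c₁ + (p-1)*q^2*c₂) * G := by
      nlinarith [hkey1, hF2, hm3, hm4]
    have hB1 : B ≤ 2*(((p-1)*t-1)*(2*q)*c₁ + (p-1)*q^2*c₂)/(t*(2-(p-1)*t)) * G := by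
      rw [div_mul_eq_mul_div, le_div_iff₀ hσ]; nlinarith
    have hm5 := mul_le_mul_of_nonneg_left hB1 (by positivity : (0:ℝ) ≤ 2*t+2*q*ε)
    nlinarith [hm5, hA2, hG0]


namespace MoserAux3

-- weighted Young inequalities
lemma pt_young1 {p s A B C kk : ℝ} (hp : 2 ≤ p) (hs : 0 < s)
    (hA : 0 ≤ A) (hB : 0 ≤ B) (hC : 0 ≤ C) (hkk : p ≤ kk) :
    A ^ (p-1) * C * B ^ (kk-1) ≤ s * (A ^ p * B ^ kk) + s ^ (1-p) * (C ^ p * B ^ (kk-p)) := by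
  have hAB : 0 ≤ A * B := mul_nonneg hA hB
  have hw : 0 ≤ B ^ (kk-p) := Real.rpow_nonneg hB _
  have hy := MoserAux.young1 (a := A*B) (b := C) hp hs hAB hC
  have hy2 := mul_le_mul_of_nonneg_right hy hw
  have id1 : A ^ (p-1) * C * B ^ (kk-1) = ((A*B) ^ (p-1) * C) * B ^ (kk-p) := by
    rw [Real.mul_rpow hA hB,
      show kk - 1 = (p-1) + (kk-p) by ring,
      Real.rpow_add_of_nonneg hB (by linarith) (by linarith)]
    ring
  have id2 : A ^ p * B ^ kk = (A*B) ^ p * B ^ (kk-p) := by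
    rw [Real.mul_rpow hA hB,
      show kk = p + (kk-p) by ring]
    rw [Real.rpow_add_of_nonneg hB (by linarith) (by linarith)]
    ring_nf
  rw [id1, id2]
  calc ((A*B) ^ (p-1) * C) * B ^ (kk-p)
      ≤ (s * (A*B) ^ p + s ^ (1-p) * C ^ p) * B ^ (kk-p) := hy2
    _ = s * ((A*B) ^ p * B ^ (kk-p)) + s ^ (1-p) * (C ^ p * B ^ (kk-p)) := by ring

lemma pt_young2 {p s A B C kk : ℝ} (hp : 2 ≤ p) (hs : 0 < s)
    (hA : 0 ≤ A) (hB : 0 ≤ B) (hC : 0 ≤ C) (hkk : p ≤ kk) :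
    A ^ (p-2) * C ^ (2:ℕ) * B ^ (kk-2) ≤
      s ^ (2:ℕ) * (A ^ p * B ^ kk) + s ^ (2-p) * (C ^ p * B ^ (kk-p)) := by
  have hAB : 0 ≤ A * B := mul_nonneg hA hB
  have hw : 0 ≤ B ^ (kk-p) := Real.rpow_nonneg hB _
  have hy := MoserAux.young2 (a := A*B) (b := C) hp hs hAB hC
  have hy2 := mul_le_mul_of_nonneg_right hy hw
  have id1 : A ^ (p-2) * C ^ (2:ℕ) * B ^ (kk-2) = ((A*B) ^ (p-2) * C ^ (2:ℕ)) * B ^ (kk-p) := by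
    rw [Real.mul_rpow hA hB,
      show kk - 2 = (p-2) + (kk-p) by ring,
      Real.rpow_add_of_nonneg hB (by linarith) (by linarith)]
    ring
  have id2 : A ^ p * B ^ kk = (A*B) ^ p * B ^ (kk-p) := by
    rw [Real.mul_rpow hA hB, show kk = p + (kk-p) by ring]
    rw [Real.rpow_add_of_nonneg hB (by linarith) (by linarith)]
    ring_nf
  rw [id1, id2]
  calc ((A*B) ^ (p-2) * C ^ (2:ℕ)) * B ^ (kk-p)
      ≤ (s ^ (2:ℕ) * (A*B) ^ p + s ^ (2-p) * C ^ p) * B ^ (kk-p) := hy2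
    _ = s ^ (2:ℕ) * ((A*B) ^ p * B ^ (kk-p)) + s ^ (2-p) * (C ^ p * B ^ (kk-p)) := by ring

-- integrability of continuous functions with compact support inside an open set
lemma integrableOn_of_support {n : ℕ} {g : EuclideanSpace ℝ (Fin n) → ℝ} {Ω K : Set (EuclideanSpace ℝ (Fin n))}
    (hΩ : IsOpen Ω) (hg : ContinuousOn g Ω) (hK : IsCompact K) (hKΩ : K ⊆ Ω)
    (h0 : ∀ x ∉ K, g x = 0) : IntegrableOn g Ω := by
  have h1 : IntegrableOn g K := ContinuousOn.integrableOn_compact hK (hg.mono hKΩ)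
  have h2 : IntegrableOn g (Ω \ K) := by
    refine (integrableOn_congr_fun (fun x hx => (h0 x hx.2))
      (hΩ.measurableSet.diff hK.measurableSet)).mpr ?_
    exact integrableOn_zero
  exact (integrableOn_union.mpr ⟨h1, h2⟩).mono_set
    (fun x hx => by by_cases hxK : x ∈ K
                    · exact Or.inl hxK
                    · exact Or.inr ⟨hx, hxK⟩)

-- global C¹ from C¹ on Ω and vanishing outside a closed set inside Ω
lemma contDiff_of_zero_outside {n : ℕ} {ψ : EuclideanSpace ℝ (Fin n) → ℝ}
    {Ω K : Set (EuclideanSpace ℝ (Fin n))} (hΩ : IsOpen Ω) (hK : IsClosed K) (hKΩ : K ⊆ Ω)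
    (hψ : ContDiffOn ℝ 1 ψ Ω) (h0 : ∀ x ∉ K, ψ x = 0) : ContDiff ℝ 1 ψ := by
  rw [contDiff_iff_contDiffAt]
  intro x
  by_cases hx : x ∈ Ω
  · exact hψ.contDiffAt (hΩ.mem_nhds hx)
  · have hxK : x ∈ Kᶜ := fun hc => hx (hKΩ hc)
    have hev : ψ =ᶠ[nhds x] (fun _ => (0:ℝ)) :=
      Filter.eventually_of_mem (hK.isOpen_compl.mem_nhds hxK) (fun y hy => h0 y hy)
    exact (contDiffAt_const (c := (0:ℝ))).congr_of_eventuallyEq hev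

-- gradient of exp(c u) φ^k
lemma hasGradientAt_exp_mul_pow {n : ℕ} {u φ : EuclideanSpace ℝ (Fin n) → ℝ}
    {x : EuclideanSpace ℝ (Fin n)} (hu : DifferentiableAt ℝ u x) (hφ : DifferentiableAt ℝ φ x)
    (c : ℝ) (k : ℕ) :
    HasGradientAt (fun y => Real.exp (c * u y) * φ y ^ k)
      ((Real.exp (c * u x) * (c * φ x ^ k)) • gradient u x
        + (Real.exp (c * u x) * ((k:ℝ) * φ x ^ (k-1))) • gradient φ x) x := by
  have hu' : HasFDerivAt u ((InnerProductSpace.toDual ℝ _) (gradient u x)) x :=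
    hu.hasGradientAt.hasFDerivAt
  have hφ' : HasFDerivAt φ ((InnerProductSpace.toDual ℝ _) (gradient φ x)) x :=
    hφ.hasGradientAt.hasFDerivAt
  have h1 : HasFDerivAt (fun y => Real.exp (c * u y))
      (Real.exp (c * u x) • (c • (InnerProductSpace.toDual ℝ _) (gradient u x))) x :=
    (hu'.const_mul c).exp
  have h2 : HasFDerivAt (fun y => φ y ^ k)
      (((k:ℝ) * φ x ^ (k-1)) • (InnerProductSpace.toDual ℝ _) (gradient φ x)) x :=
    (hasDerivAt_pow k (φ x)).comp_hasFDerivAt x hφ'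
  have h3 := h1.mul h2
  rw [hasGradientAt_iff_hasFDerivAt]
  convert h3 using 1
  · rfl
  · rfl
  rw [map_add, _root_.map_smul, _root_.map_smul]
  module

lemma continuousOn_gradient {n : ℕ} {u : EuclideanSpace ℝ (Fin n) → ℝ}
    {Ω : Set (EuclideanSpace ℝ (Fin n))} (hΩ : IsOpen Ω) (hu : ContDiffOn ℝ 1 u Ω) :
    ContinuousOn (fun x => gradient u x) Ω := by
  have h := hu.continuousOn_fderiv_of_isOpen hΩ le_rfl
  exact ((InnerProductSpace.toDual ℝ _).symm.continuous.comp_continuousOn h)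

lemma gradient_zero_outside {n : ℕ} {φ : EuclideanSpace ℝ (Fin n) → ℝ}
    {x : EuclideanSpace ℝ (Fin n)} (hx : x ∉ tsupport φ) : gradient φ x = 0 := by
  have h : fderiv ℝ φ x = 0 := by
    by_contra h
    exact hx (support_fderiv_subset ℝ (Function.mem_support.mpr h))
  show (InnerProductSpace.toDual ℝ _).symm (fderiv ℝ φ x) = 0
  rw [h, map_zero]

end MoserAux3


namespace MoserAux4

lemma holder_pt (p t kk a E1 E2 B g : ℝ) (hp : 2 ≤ p) (ht : 0 < t)
    (hkk : p*(2*t+1) ≤ kk) (ha : 0 < a) (hE1 : 0 < E1)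
    (hE : E1 ^ (2*t/(2*t+1)) = E2) (hB0 : 0 ≤ B) (hB1 : B ≤ 1) (hg : 0 ≤ g) :
    E2 * (g ^ p * B ^ (kk-p)) ≤
      (a * E1 * B ^ kk) ^ (2*t/(2*t+1)) * (a ^ (-(2*t)) * g ^ (p*(2*t+1))) ^ (1/(2*t+1)) := by
  have h2t1 : (0:ℝ) < 2*t+1 := by linarith
  have hpkk : p < kk := by nlinarith
  have hE2 : 0 < E2 := hE ▸ Real.rpow_pos_of_pos hE1 _
  have hBkk : (0:ℝ) ≤ B ^ kk := Real.rpow_nonneg hB0 _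
  -- expand the right-hand side
  have e1 : (a * E1 * B ^ kk) ^ (2*t/(2*t+1))
      = a ^ (2*t/(2*t+1)) * E2 * B ^ (kk * (2*t/(2*t+1))) := by
    rw [Real.mul_rpow (by positivity) hBkk, Real.mul_rpow ha.le hE1.le, hE,
      ← Real.rpow_mul hB0]
  have e2 : (a ^ (-(2*t)) * g ^ (p*(2*t+1))) ^ (1/(2*t+1))
      = a ^ (-(2*t) * (1/(2*t+1))) * g ^ p := by
    rw [Real.mul_rpow (Real.rpow_nonneg ha.le _) (Real.rpow_nonneg hg _),
      ← Real.rpow_mul ha.le, ← Real.rpow_mul hg]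
    congr 2
    field_simp
  rw [e1, e2]
  have e3 : a ^ (2*t/(2*t+1)) * E2 * B ^ (kk * (2*t/(2*t+1))) *
      (a ^ (-(2*t) * (1/(2*t+1))) * g ^ p)
      = E2 * (g ^ p * B ^ (kk * (2*t/(2*t+1)))) := by
    have : a ^ (2*t/(2*t+1)) * a ^ (-(2*t) * (1/(2*t+1))) = 1 := by
      rw [← Real.rpow_add ha, show 2*t/(2*t+1) + -(2*t) * (1/(2*t+1)) = 0 by field_simp; ring,
        Real.rpow_zero]
    calc a ^ (2*t/(2*t+1)) * E2 * B ^ (kk * (2*t/(2*t+1))) *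
        (a ^ (-(2*t) * (1/(2*t+1))) * g ^ p)
        = (a ^ (2*t/(2*t+1)) * a ^ (-(2*t) * (1/(2*t+1)))) *
          (E2 * (g ^ p * B ^ (kk * (2*t/(2*t+1))))) := by ring
      _ = E2 * (g ^ p * B ^ (kk * (2*t/(2*t+1)))) := by rw [this]; ring
  rw [e3]
  -- compare the powers of B
  have hBle : B ^ (kk - p) ≤ B ^ (kk * (2*t/(2*t+1))) := by
    rcases hB0.eq_or_lt with h0 | h0
    · rw [← h0, Real.zero_rpow (by intro hc; nlinarith [sub_eq_zero.mp hc] : kk - p ≠ 0)]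
      exact Real.rpow_nonneg (le_refl 0) _
    · apply Real.rpow_le_rpow_of_exponent_ge h0 hB1
      rw [← mul_div_assoc, div_le_iff₀ h2t1]
      nlinarith
  have := mul_le_mul_of_nonneg_left hBle (by positivity : (0:ℝ) ≤ E2 * g ^ p)
  calc E2 * (g ^ p * B ^ (kk-p)) = E2 * g ^ p * B ^ (kk-p) := by ring
    _ ≤ E2 * g ^ p * B ^ (kk * (2*t/(2*t+1))) := this
    _ = E2 * (g ^ p * B ^ (kk * (2*t/(2*t+1)))) := by ring

end MoserAux4


set_option maxHeartbeats 2000000 in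
/-- Moser-iteration estimate (Gelfand nonlinearity, exponent `p·m`) for
stable weak solutions of `-Δ_p u = f(x) e^u`:
`∫_Ω f e^{(2t+1)u} φ^{pm} ≤ C ∫_Ω f^{-2t} |∇φ|^{p(2t+1)}` for `0 < t < 2/(p-1)`,
with `C` independent of `Ω`, `f` and `u`; both sides are `[0,∞]`-valued integrals. -/
theorem moser_estimate_gelfand_pm
    (p t : ℝ) (hp : 2 ≤ p) (ht1 : 0 < t) (ht2 : t < 2 / (p - 1)) :
    ∃ m₀ : ℕ, 1 ≤ m₀ ∧ ∀ m : ℕ, m₀ ≤ m → ∃ C : ℝ, 0 < C ∧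
      ∀ (n : ℕ), 1 ≤ n →
      ∀ Ω : Set (EuclideanSpace ℝ (Fin n)), IsOpen Ω →
      ∀ f : EuclideanSpace ℝ (Fin n) → ℝ, ContinuousOn f Ω → (∀ x ∈ Ω, 0 ≤ f x) →
      ∀ u : EuclideanSpace ℝ (Fin n) → ℝ, ContDiffOn ℝ 1 u Ω →
      (∀ φ : EuclideanSpace ℝ (Fin n) → ℝ, ContDiff ℝ 1 φ → HasCompactSupport φ →
        tsupport φ ⊆ Ω →
        (∫ x in Ω, ‖gradient u x‖ ^ (p - 2) * (inner ℝ (gradient u x) (gradient φ x) : ℝ)) =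
          ∫ x in Ω, f x * Real.exp (u x) * φ x) →
      (∀ φ : EuclideanSpace ℝ (Fin n) → ℝ, ContDiff ℝ 1 φ → HasCompactSupport φ →
        tsupport φ ⊆ Ω →
        (∫ x in Ω, f x * Real.exp (u x) * φ x ^ 2) ≤
          (p - 1) * ∫ x in Ω, ‖gradient u x‖ ^ (p - 2) * ‖gradient φ x‖ ^ 2) →
      ∀ φ : EuclideanSpace ℝ (Fin n) → ℝ, ContDiff ℝ 1 φ → HasCompactSupport φ →
        tsupport φ ⊆ Ω → (∀ x, 0 ≤ φ x) → (∀ x, φ x ≤ 1) →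
        (∫⁻ x in Ω, ENNReal.ofReal
            (f x * Real.exp ((2 * t + 1) * u x) * φ x ^ (p * (m : ℝ)))) ≤
          ENNReal.ofReal C *
            ∫⁻ x in Ω, ENNReal.ofReal (f x) ^ (-(2 * t)) *
              ENNReal.ofReal (‖gradient φ x‖ ^ (p * (2 * t + 1))) := by
  classical
  have hp1 : (0:ℝ) < p - 1 := by linarith
  have ht2' : (p-1)*t < 2 := by
    have := (lt_div_iff₀ hp1).mp ht2; nlinarith
  -- choice of k and m₀
  set k : ℕ := max 1 ⌈p*(2*t+1)/2⌉₊ with hkdef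
  have hk1 : 1 ≤ k := le_max_left _ _
  have hkR : (1:ℝ) ≤ (k:ℝ) := by exact_mod_cast hk1
  have hkp : p*(2*t+1) ≤ 2*(k:ℝ) := by
    have h1 := Nat.le_ceil (p*(2*t+1)/2)
    have h2 : ((⌈p*(2*t+1)/2⌉₊ : ℕ) : ℝ) ≤ (k:ℝ) := by
      exact_mod_cast le_max_right 1 ⌈p*(2*t+1)/2⌉₊
    linarith
  have hp2k : p ≤ 2*(k:ℝ) := by nlinarith
  refine ⟨k, hk1, ?_⟩
  intro m hm
  have hq : 1 ≤ (k:ℝ) := hkR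
  have hq0 : 0 < (k:ℝ) := by linarith
  -- choice of ε, c₁, c₂
  set ε : ℝ := min (t^2/(2*(k:ℝ)^2))
      ((t*(2-(p-1)*t)/2) / (abs (1-(p-1)*t)*(2*(k:ℝ)) + (p-1)*(k:ℝ)^2)) with hεdef
  have hden : 0 < abs (1-(p-1)*t)*(2*(k:ℝ)) + (p-1)*(k:ℝ)^2 := by positivity
  have hε : 0 < ε := by
    apply lt_min (by positivity)
    apply div_pos (by nlinarith) hden
  set c₁ : ℝ := ε ^ ((1:ℝ)-p) with hc₁def
  set c₂ : ℝ := (Real.sqrt ε) ^ ((2:ℝ)-p) with hc₂def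
  have hc₁ : 0 < c₁ := Real.rpow_pos_of_pos hε _
  have hc₂ : 0 < c₂ := Real.rpow_pos_of_pos (Real.sqrt_pos.mpr hε) _
  have hε1 : (p-1)*(k:ℝ)^2*ε ≤ (p-1)*t^2/2 := by
    have h1 : ε ≤ t^2/(2*(k:ℝ)^2) := min_le_left _ _
    have := mul_le_mul_of_nonneg_left h1 (by positivity : (0:ℝ) ≤ (p-1)*(k:ℝ)^2)
    calc (p-1)*(k:ℝ)^2*ε ≤ (p-1)*(k:ℝ)^2*(t^2/(2*(k:ℝ)^2)) := this
      _ = (p-1)*t^2/2 := by field_simp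
  have hε2 : ε*(abs (1-(p-1)*t)*(2*(k:ℝ)) + (p-1)*(k:ℝ)^2) ≤ t*(2-(p-1)*t)/2 := by
    have h1 : ε ≤ (t*(2-(p-1)*t)/2) / (abs (1-(p-1)*t)*(2*(k:ℝ)) + (p-1)*(k:ℝ)^2) := min_le_right _ _
    rw [← le_div_iff₀ hden]
    exact h1
  obtain ⟨C₃, hC₃, hKey⟩ := MoserAux2.key_real p t (k:ℝ) ε c₁ c₂ hp ht1 ht2' hq hε hc₁ hc₂ hε1 hε2
  set M : ℝ := max C₃ 1 with hMdef
  have hM1 : (1:ℝ) ≤ M := le_max_right _ _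
  have hM0 : (0:ℝ) < M := by linarith
  refine ⟨M ^ (2*t+1), by positivity, ?_⟩
  intro n hn Ω hΩ f hf hf0 u hu hweak hstab φ hφ hφc hφΩ hφ0 hφ1
  have ms : MeasurableSet Ω := hΩ.measurableSet
  set K : Set (EuclideanSpace ℝ (Fin n)) := tsupport φ with hKdef
  have hKc : IsCompact K := hφc
  have hKcl : IsClosed K := isClosed_tsupport φ
  -- differentiability facts
  have hud : ∀ x ∈ Ω, DifferentiableAt ℝ u x := fun x hx =>
    (hu.contDiffAt (hΩ.mem_nhds hx)).differentiableAt one_ne_zero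
  have hφd : ∀ x, DifferentiableAt ℝ φ x := fun x => hφ.differentiable one_ne_zero x
  -- continuity facts
  have huc : ContinuousOn u Ω := hu.continuousOn
  have hgu : ContinuousOn (fun x => gradient u x) Ω := MoserAux3.continuousOn_gradient hΩ hu
  have hgφ : Continuous (fun x => gradient φ x) := by
    have h := hφ.continuous_fderiv one_ne_zero
    exact ((InnerProductSpace.toDual ℝ _).symm.continuous.comp h)
  have hφcont : Continuous φ := hφ.continuous
  have he2 : ContinuousOn (fun x => Real.exp (2*t*u x)) Ω :=
    Real.continuous_exp.comp_continuousOn (continuousOn_const.mul huc)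
  -- the integrand functions
  set τA : EuclideanSpace ℝ (Fin n) → ℝ :=
    fun x => f x * Real.exp ((2*t+1) * u x) * φ x ^ (2*k) with hτA
  set τB : EuclideanSpace ℝ (Fin n) → ℝ :=
    fun x => Real.exp (2*t*u x) * (‖gradient u x‖ ^ p * φ x ^ ((2*(k:ℝ)))) with hτB
  set τD : EuclideanSpace ℝ (Fin n) → ℝ :=
    fun x => Real.exp (2*t*u x) * (‖gradient u x‖ ^ (p-2) *
      (inner ℝ (gradient u x) (gradient φ x) : ℝ)) * φ x ^ (2*k-1) with hτD
  set τE : EuclideanSpace ℝ (Fin n) → ℝ :=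
    fun x => Real.exp (2*t*u x) * (‖gradient u x‖ ^ (p-1) * ‖gradient φ x‖ *
      φ x ^ ((2*(k:ℝ)) - 1)) with hτE
  set τF : EuclideanSpace ℝ (Fin n) → ℝ :=
    fun x => Real.exp (2*t*u x) * (‖gradient u x‖ ^ (p-2) * ‖gradient φ x‖ ^ (2:ℕ)) *
      φ x ^ (2*k-2) with hτF
  set τG : EuclideanSpace ℝ (Fin n) → ℝ :=
    fun x => Real.exp (2*t*u x) * (‖gradient φ x‖ ^ p * φ x ^ ((2*(k:ℝ)) - p)) with hτG
  -- cast lemmas for powers of φ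
  have c2k : ∀ x, φ x ^ ((2*(k:ℝ))) = φ x ^ (2*k : ℕ) := by
    intro x
    rw [← Real.rpow_natCast (φ x) (2*k)]
    congr 1
    push_cast; ring
  have c2k1 : ∀ x, φ x ^ ((2*(k:ℝ)) - 1) = φ x ^ (2*k-1 : ℕ) := by
    intro x
    rw [← Real.rpow_natCast (φ x) (2*k-1)]
    congr 1
    rw [Nat.cast_sub (by omega : 1 ≤ 2*k)]
    push_cast; ring
  have c2k2 : ∀ x, φ x ^ ((2*(k:ℝ)) - 2) = φ x ^ (2*k-2 : ℕ) := by
    intro x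
    rw [← Real.rpow_natCast (φ x) (2*k-2)]
    congr 1
    rw [Nat.cast_sub (by omega : 2 ≤ 2*k)]
    push_cast; ring
  -- vanishing outside K
  have hvan : ∀ x ∉ K, φ x = 0 ∧ gradient φ x = 0 := fun x hx =>
    ⟨image_eq_zero_of_notMem_tsupport hx, MoserAux3.gradient_zero_outside hx⟩
  -- continuity of the integrands on Ω
  have hexpA : ContinuousOn (fun x => Real.exp ((2*t+1)*u x)) Ω :=
    Real.continuous_exp.comp_continuousOn (continuousOn_const.mul huc)
  have contA : ContinuousOn τA Ω := (hf.mul hexpA).mul (hφcont.pow (2*k)).continuousOn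
  have contB : ContinuousOn τB Ω := by
    apply he2.mul
    apply ContinuousOn.mul
    · exact hgu.norm.rpow_const (fun x _ => Or.inr (by linarith))
    · exact fun x hx => ((hφcont.rpow_const (fun y => Or.inr (by positivity))).continuousAt).continuousWithinAt
  have contD : ContinuousOn τD Ω := by
    refine ContinuousOn.mul (he2.mul (ContinuousOn.mul ?_ (hgu.inner hgφ.continuousOn))) ?_
    · exact hgu.norm.rpow_const (fun x _ => Or.inr (by linarith))
    · exact (hφcont.pow (2*k-1)).continuousOn
  have contE : ContinuousOn τE Ω := by
    apply he2.mul
    refine ContinuousOn.mul (ContinuousOn.mul ?_ hgφ.norm.continuousOn) ?_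
    · exact hgu.norm.rpow_const (fun x _ => Or.inr (by linarith))
    · exact fun x hx => ((hφcont.rpow_const (fun y => Or.inr (by linarith))).continuousAt).continuousWithinAt
  have contF : ContinuousOn τF Ω := by
    refine ContinuousOn.mul (he2.mul (ContinuousOn.mul ?_ (hgφ.norm.pow 2).continuousOn)) ?_
    · exact hgu.norm.rpow_const (fun x _ => Or.inr (by linarith))
    · exact (hφcont.pow (2*k-2)).continuousOn
  have contG : ContinuousOn τG Ω := by
    apply he2.mul
    refine ContinuousOn.mul ?_ ?_
    · exact hgφ.norm.continuousOn.rpow_const (fun x _ => Or.inr (by positivity))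
    · exact fun x hx => ((hφcont.rpow_const (fun y => Or.inr (by nlinarith))).continuousAt).continuousWithinAt
  -- integrability
  have hIA : IntegrableOn τA Ω := by
    apply MoserAux3.integrableOn_of_support hΩ contA hKc hφΩ
    intro x hx
    simp [hτA, (hvan x hx).1, zero_pow (by omega : 2*k ≠ 0)]
  have hIB : IntegrableOn τB Ω := by
    apply MoserAux3.integrableOn_of_support hΩ contB hKc hφΩ
    intro x hx
    simp [hτB, (hvan x hx).1, Real.zero_rpow (by positivity : 2*(k:ℝ) ≠ 0)]
  have hID : IntegrableOn τD Ω := by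
    apply MoserAux3.integrableOn_of_support hΩ contD hKc hφΩ
    intro x hx
    simp [hτD, (hvan x hx).2, (hvan x hx).1]
    exact Or.inr (by omega)
  have hIE : IntegrableOn τE Ω := by
    apply MoserAux3.integrableOn_of_support hΩ contE hKc hφΩ
    intro x hx
    simp [hτE, (hvan x hx).2]
  have hIF : IntegrableOn τF Ω := by
    apply MoserAux3.integrableOn_of_support hΩ contF hKc hφΩ
    intro x hx
    simp [hτF, (hvan x hx).2]
  have hIG : IntegrableOn τG Ω := by
    apply MoserAux3.integrableOn_of_support hΩ contG hKc hφΩ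
    intro x hx
    simp [hτG, (hvan x hx).2, Real.zero_rpow (by positivity : p ≠ 0)]
  -- the integral values
  set IA := ∫ x in Ω, τA x with hIAdef
  set IB := ∫ x in Ω, τB x with hIBdef
  set ID := ∫ x in Ω, τD x with hIDdef
  set IE := ∫ x in Ω, τE x with hIEdef
  set IF := ∫ x in Ω, τF x with hIFdef
  set IG := ∫ x in Ω, τG x with hIGdef
  -- nonnegativity
  have hτA0 : ∀ x ∈ Ω, 0 ≤ τA x := fun x hx => by
    have := hf0 x hx; have := hφ0 x; positivity
  have hτB0 : ∀ x, 0 ≤ τB x := fun x => by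
    have := hφ0 x; positivity
  have hτE0 : ∀ x, 0 ≤ τE x := fun x => by
    have := hφ0 x; positivity
  have hτF0 : ∀ x, 0 ≤ τF x := fun x => by
    have := hφ0 x; positivity
  have hτG0 : ∀ x, 0 ≤ τG x := fun x => by
    have := hφ0 x; positivity
  have hIA0 : 0 ≤ IA := setIntegral_nonneg ms hτA0
  have hIB0 : 0 ≤ IB := setIntegral_nonneg ms (fun x _ => hτB0 x)
  have hIE0 : 0 ≤ IE := setIntegral_nonneg ms (fun x _ => hτE0 x)
  have hIF0 : 0 ≤ IF := setIntegral_nonneg ms (fun x _ => hτF0 x)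
  have hIG0 : 0 ≤ IG := setIntegral_nonneg ms (fun x _ => hτG0 x)

  -- test function machinery
  have hvanψ : ∀ (c:ℝ) (j:ℕ), j ≠ 0 → ∀ x, x ∉ K → Real.exp (c*u x) * φ x ^ j = 0 := by
    intro c j hj x hx
    rw [(hvan x hx).1, zero_pow hj, mul_zero]
  have htest : ∀ (c:ℝ) (j:ℕ), j ≠ 0 → ContDiff ℝ 1 (fun y => Real.exp (c*u y) * φ y ^ j) :=
    fun c j hj => MoserAux3.contDiff_of_zero_outside hΩ hKcl hφΩ
      (((contDiffOn_const.mul hu).exp).mul (hφ.contDiffOn.pow j)) (hvanψ c j hj)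
  have hsupp : ∀ (c:ℝ) (j:ℕ), j ≠ 0 → HasCompactSupport (fun y => Real.exp (c*u y) * φ y ^ j) :=
    fun c j hj => HasCompactSupport.intro hKc (hvanψ c j hj)
  have htsupp : ∀ (c:ℝ) (j:ℕ), j ≠ 0 → tsupport (fun y => Real.exp (c*u y) * φ y ^ j) ⊆ Ω :=
    fun c j hj =>
      (closure_minimal (Function.support_subset_iff'.mpr (hvanψ c j hj)) hKcl).trans hφΩ
  have hg : ∀ (c:ℝ) (j:ℕ), ∀ x ∈ Ω,
      gradient (fun y => Real.exp (c*u y) * φ y ^ j) x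
        = (Real.exp (c*u x) * (c * φ x ^ j)) • gradient u x
          + (Real.exp (c*u x) * ((j:ℝ) * φ x ^ (j-1))) • gradient φ x :=
    fun c j x hx => (MoserAux3.hasGradientAt_exp_mul_pow (hud x hx) (hφd x) c j).gradient
  have norm_comb : ∀ (a b : ℝ) (v w : EuclideanSpace ℝ (Fin n)),
      ‖a • v + b • w‖^2 = a^2*‖v‖^2 + 2*a*b*(inner ℝ v w : ℝ) + b^2*‖w‖^2 := by
    intro a b v w
    rw [norm_add_sq_real, real_inner_smul_left, real_inner_smul_right, norm_smul, norm_smul]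
    simp [mul_pow, sq_abs]
    ring
  have inner_comb : ∀ (a b : ℝ) (v w : EuclideanSpace ℝ (Fin n)),
      (inner ℝ v (a • v + b • w) : ℝ) = a*‖v‖^2 + b*(inner ℝ v w : ℝ) := by
    intro a b v w
    rw [inner_add_right, real_inner_smul_right, real_inner_smul_right,
      real_inner_self_eq_norm_sq]
  have hq1 : ∀ x, φ x ^ k * φ x ^ k = φ x ^ (2*k) := fun x => by
    rw [← pow_add]; congr 1; omega
  have hq2 : ∀ x, φ x ^ k * φ x ^ (k-1) = φ x ^ (2*k-1) := fun x => by
    rw [← pow_add]; congr 1; omega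
  have hq3 : ∀ x, φ x ^ (k-1) * φ x ^ (k-1) = φ x ^ (2*k-2) := fun x => by
    rw [← pow_add]; congr 1; omega
  have hexp2 : ∀ x, Real.exp (t*u x) * Real.exp (t*u x) = Real.exp (2*t*u x) := fun x => by
    rw [← Real.exp_add]; congr 1; ring
  have hexpu : ∀ x, Real.exp ((2*t+1)*u x) = Real.exp (u x) * Real.exp (2*t*u x) := fun x => by
    rw [← Real.exp_add]; congr 1; ring
  -- the weak-solution identity with test function e^{2tu} φ^{2k}
  have hWap := hweak (fun y => Real.exp ((2*t)*u y) * φ y ^ (2*k))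
    (htest (2*t) (2*k) (by omega)) (hsupp (2*t) (2*k) (by omega)) (htsupp (2*t) (2*k) (by omega))
  have eWL : ∀ x ∈ Ω, ‖gradient u x‖ ^ (p-2) *
      (inner ℝ (gradient u x) (gradient (fun y => Real.exp ((2*t)*u y) * φ y ^ (2*k)) x) : ℝ)
      = 2*t * τB x + 2*(k:ℝ) * τD x := by
    intro x hx
    rw [hg (2*t) (2*k) x hx, inner_comb]
    simp only [hτB, hτD]
    rw [c2k x, ← MoserAux.rp_mul_sq hp (norm_nonneg (gradient u x))]
    push_cast
    ring
  have eWR : ∀ x ∈ Ω,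
      f x * Real.exp (u x) * ((fun y => Real.exp ((2*t)*u y) * φ y ^ (2*k)) x) = τA x := by
    intro x hx
    simp only [hτA]
    rw [hexpu x]
    ring
  have hWL : (∫ x in Ω, ‖gradient u x‖ ^ (p-2) *
      (inner ℝ (gradient u x) (gradient (fun y => Real.exp ((2*t)*u y) * φ y ^ (2*k)) x) : ℝ))
      = 2*t*IB + 2*(k:ℝ)*ID := by
    rw [setIntegral_congr_fun ms eWL]
    rw [integral_add (hIB.const_mul (2*t)) (hID.const_mul (2*(k:ℝ))),
      integral_const_mul, integral_const_mul]
  have hWR : (∫ x in Ω,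
      f x * Real.exp (u x) * ((fun y => Real.exp ((2*t)*u y) * φ y ^ (2*k)) x)) = IA :=
    setIntegral_congr_fun ms eWR
  have hW' : 2*t*IB + 2*(k:ℝ)*ID = IA := by rw [← hWL, ← hWR]; exact hWap
  -- the stability inequality with test function e^{tu} φ^k
  have hSap := hstab (fun y => Real.exp (t*u y) * φ y ^ k)
    (htest t k (by omega)) (hsupp t k (by omega)) (htsupp t k (by omega))
  have eSL : ∀ x ∈ Ω,
      f x * Real.exp (u x) * ((fun y => Real.exp (t*u y) * φ y ^ k) x) ^ 2 = τA x := by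
    intro x hx
    simp only [hτA]
    have h1 : (Real.exp (t*u x))^2 = Real.exp (2*t*u x) := by rw [pow_two]; exact hexp2 x
    have h2 : (φ x ^ k)^2 = φ x ^ (2*k) := by rw [pow_two]; exact hq1 x
    rw [mul_pow, h1, h2, hexpu x]
    ring
  have eSR : ∀ x ∈ Ω, ‖gradient u x‖^(p-2) *
      ‖gradient (fun y => Real.exp (t*u y) * φ y ^ k) x‖^2
      = t^2 * τB x + 2*t*(k:ℝ) * τD x + (k:ℝ)^2 * τF x := by
    intro x hx
    rw [hg t k x hx, norm_comb]
    simp only [hτB, hτD, hτF]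
    rw [c2k x, ← MoserAux.rp_mul_sq hp (norm_nonneg (gradient u x)), ← hq1 x, ← hq2 x,
      ← hq3 x, ← hexp2 x]
    ring
  have hSL : (∫ x in Ω,
      f x * Real.exp (u x) * ((fun y => Real.exp (t*u y) * φ y ^ k) x) ^ 2) = IA :=
    setIntegral_congr_fun ms eSL
  have hSR : (∫ x in Ω, ‖gradient u x‖^(p-2) *
      ‖gradient (fun y => Real.exp (t*u y) * φ y ^ k) x‖^2)
      = t^2*IB + 2*t*(k:ℝ)*ID + (k:ℝ)^2*IF := by
    rw [setIntegral_congr_fun ms eSR]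
    have i1 : (∫ x in Ω, (t^2*τB x + 2*t*(k:ℝ)*τD x + (k:ℝ)^2*τF x))
        = (∫ x in Ω, (t^2*τB x + 2*t*(k:ℝ)*τD x)) + ∫ x in Ω, (k:ℝ)^2*τF x :=
      integral_add ((hIB.const_mul _).add (hID.const_mul _)) (hIF.const_mul _)
    have i2 : (∫ x in Ω, (t^2*τB x + 2*t*(k:ℝ)*τD x))
        = (∫ x in Ω, t^2*τB x) + ∫ x in Ω, 2*t*(k:ℝ)*τD x :=
      integral_add (hIB.const_mul _) (hID.const_mul _)
    rw [i1, i2, integral_const_mul, integral_const_mul, integral_const_mul]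
  have hS' : IA ≤ (p-1)*(t^2*IB + 2*t*(k:ℝ)*ID + (k:ℝ)^2*IF) := by
    rw [← hSL, ← hSR]; exact hSap
  -- pointwise comparisons
  have hptD : ∀ x, τD x ≤ τE x := by
    intro x
    simp only [hτD, hτE]
    have hX : (0:ℝ) ≤ ‖gradient u x‖ ^ (p-2) := Real.rpow_nonneg (norm_nonneg _) _
    have step := mul_le_mul_of_nonneg_left
      (real_inner_le_norm (gradient u x) (gradient φ x)) hX
    have step2 := mul_le_mul_of_nonneg_left step (Real.exp_pos (2*t*u x)).le
    have step3 := mul_le_mul_of_nonneg_right step2 (pow_nonneg (hφ0 x) (2*k-1))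
    calc Real.exp (2*t*u x) * (‖gradient u x‖^(p-2) *
          (inner ℝ (gradient u x) (gradient φ x):ℝ)) * φ x ^ (2*k-1)
        ≤ Real.exp (2*t*u x) * (‖gradient u x‖^(p-2) *
          (‖gradient u x‖ * ‖gradient φ x‖)) * φ x ^ (2*k-1) := step3
      _ = Real.exp (2*t*u x) * (‖gradient u x‖^(p-1) * ‖gradient φ x‖ *
          φ x ^ ((2*(k:ℝ)) - 1)) := by
          rw [c2k1 x, ← MoserAux.rp_mul_one hp (norm_nonneg (gradient u x))]
          ring
  have hptE : ∀ x, τE x ≤ ε*τB x + c₁*τG x := by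
    intro x
    have hY := MoserAux3.pt_young1 (p := p) (s := ε) (A := ‖gradient u x‖) (B := φ x)
      (C := ‖gradient φ x‖) (kk := 2*(k:ℝ)) hp hε (norm_nonneg _) (hφ0 x) (norm_nonneg _) hp2k
    have hY2 := mul_le_mul_of_nonneg_left hY (Real.exp_pos (2*t*u x)).le
    simp only [hτE, hτB, hτG]
    calc Real.exp (2*t*u x) * (‖gradient u x‖^(p-1) * ‖gradient φ x‖ * φ x ^ ((2*(k:ℝ))-1))
        ≤ Real.exp (2*t*u x) * (ε*(‖gradient u x‖^p * φ x ^ (2*(k:ℝ)))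
            + ε^((1:ℝ)-p)*(‖gradient φ x‖^p * φ x ^ ((2*(k:ℝ))-p))) := hY2
      _ = ε*(Real.exp (2*t*u x) * (‖gradient u x‖^p * φ x ^ (2*(k:ℝ))))
          + c₁*(Real.exp (2*t*u x) * (‖gradient φ x‖^p * φ x ^ ((2*(k:ℝ))-p))) := by
          rw [hc₁def]; ring
  have hptF : ∀ x, τF x ≤ ε*τB x + c₂*τG x := by
    intro x
    have hY := MoserAux3.pt_young2 (p := p) (s := Real.sqrt ε) (A := ‖gradient u x‖)
      (B := φ x) (C := ‖gradient φ x‖) (kk := 2*(k:ℝ)) hp (Real.sqrt_pos.mpr hε)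
      (norm_nonneg _) (hφ0 x) (norm_nonneg _) hp2k
    have hY2 := mul_le_mul_of_nonneg_left hY (Real.exp_pos (2*t*u x)).le
    simp only [hτF, hτB, hτG]
    calc Real.exp (2*t*u x) * (‖gradient u x‖^(p-2) * ‖gradient φ x‖^(2:ℕ)) * φ x ^ (2*k-2)
        = Real.exp (2*t*u x) * (‖gradient u x‖^(p-2) * ‖gradient φ x‖^(2:ℕ) *
            φ x ^ ((2*(k:ℝ))-2)) := by rw [c2k2 x]; ring
      _ ≤ Real.exp (2*t*u x) * ((Real.sqrt ε)^(2:ℕ)*(‖gradient u x‖^p * φ x ^ (2*(k:ℝ)))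
            + (Real.sqrt ε)^((2:ℝ)-p)*(‖gradient φ x‖^p * φ x ^ ((2*(k:ℝ))-p))) := hY2
      _ = ε*(Real.exp (2*t*u x) * (‖gradient u x‖^p * φ x ^ (2*(k:ℝ))))
          + c₂*(Real.exp (2*t*u x) * (‖gradient φ x‖^p * φ x ^ ((2*(k:ℝ))-p))) := by
          rw [hc₂def, Real.sq_sqrt hε.le]; ring
  have hDE' : ID ≤ IE := setIntegral_mono_on hID hIE ms (fun x _ => hptD x)
  have hE' : IE ≤ ε*IB + c₁*IG := by
    have h := setIntegral_mono_on (g := fun x => ε*τB x + c₁*τG x) hIE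
      ((hIB.const_mul ε).add (hIG.const_mul c₁)) ms (fun x _ => hptE x)
    rwa [integral_add (hIB.const_mul ε) (hIG.const_mul c₁),
      integral_const_mul, integral_const_mul] at h
  have hF' : IF ≤ ε*IB + c₂*IG := by
    have h := setIntegral_mono_on (g := fun x => ε*τB x + c₂*τG x) hIF
      ((hIB.const_mul ε).add (hIG.const_mul c₂)) ms (fun x _ => hptF x)
    rwa [integral_add (hIB.const_mul ε) (hIG.const_mul c₂),
      integral_const_mul, integral_const_mul] at h
  have hAG : IA ≤ C₃ * IG :=
    hKey IA IB ID IE IF IG hIA0 hIB0 hIE0 hIF0 hIG0 hW' hS' hDE' hE' hF'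
  have hAM : IA ≤ M * IG := hAG.trans (mul_le_mul_of_nonneg_right (le_max_left C₃ 1) hIG0)

  -- ENNReal endgame
  set R := ∫⁻ x in Ω, ENNReal.ofReal (f x) ^ (-(2 * t)) *
      ENNReal.ofReal (‖gradient φ x‖ ^ (p * (2 * t + 1))) with hRdef
  have h2t1 : (0:ℝ) < 2*t+1 := by linarith
  have hθ0 : (0:ℝ) ≤ 2*t/(2*t+1) := div_nonneg (by linarith) (by linarith)
  have hδ0 : (0:ℝ) ≤ 1/(2*t+1) := by positivity
  have hpm : 2*(k:ℝ) ≤ p*(m:ℝ) := by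
    have hkm : (k:ℝ) ≤ (m:ℝ) := by exact_mod_cast hm
    have hm0 : (0:ℝ) ≤ (m:ℝ) := by positivity
    have h2 : 2*(m:ℝ) ≤ p*(m:ℝ) := mul_le_mul_of_nonneg_right hp hm0
    linarith
  have step1 : (∫⁻ x in Ω, ENNReal.ofReal
      (f x * Real.exp ((2 * t + 1) * u x) * φ x ^ (p * (m : ℝ))))
      ≤ ENNReal.ofReal IA := by
    have hle : ∀ x ∈ Ω, f x * Real.exp ((2*t+1) * u x) * φ x ^ (p*(m:ℝ)) ≤ τA x := by
      intro x hx
      simp only [hτA]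
      have hfx := hf0 x hx
      have hφx := hφ0 x
      have hpow : φ x ^ (p*(m:ℝ)) ≤ φ x ^ (2*k : ℕ) := by
        rcases hφx.eq_or_lt with h0 | h0
        · rw [← h0, Real.zero_rpow (ne_of_gt (lt_of_lt_of_le (by linarith : (0:ℝ) < 2*(k:ℝ)) hpm)),
            zero_pow (by omega : 2*k ≠ 0)]
        · rw [← c2k x]
          exact Real.rpow_le_rpow_of_exponent_ge h0 (hφ1 x) hpm
      exact mul_le_mul_of_nonneg_left hpow (by positivity)
    calc (∫⁻ x in Ω, ENNReal.ofReal (f x * Real.exp ((2*t+1) * u x) * φ x ^ (p*(m:ℝ))))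
        ≤ ∫⁻ x in Ω, ENNReal.ofReal (τA x) := by
          apply setLIntegral_mono_ae ((contA.aemeasurable ms).ennreal_ofReal)
          exact ae_of_all _ (fun x hx => ENNReal.ofReal_le_ofReal (hle x hx))
      _ = ENNReal.ofReal IA := by
          rw [← ofReal_integral_eq_lintegral_ofReal hIA
            ((ae_restrict_iff' ms).mpr (ae_of_all _ hτA0))]
  rcases eq_or_ne R ⊤ with hR | hR
  · rw [hR, ENNReal.mul_top (by
      rw [Ne, ENNReal.ofReal_eq_zero]; push_neg; positivity)]
    exact le_top
  · have hfae : AEMeasurable f (volume.restrict Ω) := hf.aemeasurable ms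
    have hgφc : Continuous (fun x => ‖gradient φ x‖ ^ (p*(2*t+1))) := by
      apply Continuous.rpow_const hgφ.norm
      intro x; right; positivity
    have hmes : AEMeasurable (fun x => ENNReal.ofReal (f x) ^ (-(2*t)) *
        ENNReal.ofReal (‖gradient φ x‖ ^ (p*(2*t+1)))) (volume.restrict Ω) :=
      (hfae.ennreal_ofReal.pow_const _).mul
        ((ENNReal.continuous_ofReal.comp hgφc).aemeasurable)
    have haebad : ∀ᵐ x ∂(volume.restrict Ω), (ENNReal.ofReal (f x) ^ (-(2*t)) *
        ENNReal.ofReal (‖gradient φ x‖ ^ (p*(2*t+1)))) < ⊤ :=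
      ae_lt_top' hmes (by rw [← hRdef] at *; exact hR)
    have hconj : Real.HolderConjugate ((2*t+1)/(2*t)) (2*t+1) := by
      constructor
      · rw [inv_div, inv_one, ← one_div (2*t+1), ← add_div,
          div_self (by positivity : (2*t+1:ℝ) ≠ 0)]
      · positivity
      · positivity
    set F1 := fun x => (ENNReal.ofReal (τA x)) ^ (2*t/(2*t+1)) with hF1def
    set G1 := fun x => (ENNReal.ofReal (f x) ^ (-(2*t)) *
        ENNReal.ofReal (‖gradient φ x‖ ^ (p*(2*t+1)))) ^ (1/(2*t+1)) with hG1def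
    have hF1m : AEMeasurable F1 (volume.restrict Ω) :=
      ((contA.aemeasurable ms).ennreal_ofReal).pow_const _
    have hG1m : AEMeasurable G1 (volume.restrict Ω) := hmes.pow_const _
    have hHold := ENNReal.lintegral_mul_le_Lp_mul_Lq (volume.restrict Ω) hconj hF1m hG1m
    have eF1 : ∀ x, F1 x ^ ((2*t+1)/(2*t)) = ENNReal.ofReal (τA x) := by
      intro x
      simp only [hF1def]
      rw [← ENNReal.rpow_mul, show (2*t/(2*t+1))*((2*t+1)/(2*t)) = 1 by
        field_simp, ENNReal.rpow_one]
    have eG1 : ∀ x, G1 x ^ (2*t+1) = ENNReal.ofReal (f x) ^ (-(2*t)) *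
        ENNReal.ofReal (‖gradient φ x‖ ^ (p*(2*t+1))) := by
      intro x
      simp only [hG1def]
      rw [← ENNReal.rpow_mul, show (1/(2*t+1))*(2*t+1) = 1 by field_simp,
        ENNReal.rpow_one]
    have hptH : ∀ᵐ x ∂(volume.restrict Ω), ENNReal.ofReal (τG x) ≤ F1 x * G1 x := by
      filter_upwards [haebad, (ae_restrict_iff' ms).mpr
        (ae_of_all _ (fun x (hx : x ∈ Ω) => hf0 x hx))] with x hxlt hxf
      rcases hxf.eq_or_lt with hf0x | hfpos
      · by_cases hgz : gradient φ x = 0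
        · have hz : τG x = 0 := by
            simp only [hτG]
            rw [hgz]
            simp [Real.zero_rpow (by positivity : p ≠ 0)]
          rw [hz]
          simp
        · exfalso
          have h1 : ENNReal.ofReal (f x) ^ (-(2*t)) = ⊤ := by
            rw [← hf0x, ENNReal.ofReal_zero]
            exact ENNReal.zero_rpow_of_neg (by linarith)
          have h2 : ENNReal.ofReal (‖gradient φ x‖ ^ (p*(2*t+1))) ≠ 0 := by
            rw [Ne, ENNReal.ofReal_eq_zero]
            push_neg
            have hng : 0 < ‖gradient φ x‖ := norm_pos_iff.mpr hgz
            positivity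
          rw [h1, ENNReal.top_mul h2] at hxlt
          exact lt_irrefl _ hxlt
      · have hreal := MoserAux4.holder_pt p t (2*(k:ℝ)) (f x)
          (Real.exp ((2*t+1)*u x)) (Real.exp (2*t*u x)) (φ x) ‖gradient φ x‖
          hp ht1 hkp hfpos (Real.exp_pos _)
          (by rw [← Real.exp_mul]; congr 1; field_simp)
          (hφ0 x) (hφ1 x) (norm_nonneg _)
        have hτGx : τG x = Real.exp (2*t*u x) *
            (‖gradient φ x‖^p * φ x ^ ((2*(k:ℝ)) - p)) := by simp only [hτG]
        have hτAx : τA x = f x * Real.exp ((2*t+1)*u x) * φ x ^ (2*(k:ℝ)) := by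
          simp only [hτA]; rw [c2k x]
        have hbase1 : (0:ℝ) ≤ f x * Real.exp ((2*t+1)*u x) * φ x ^ (2*(k:ℝ)) :=
          mul_nonneg (mul_nonneg hfpos.le (Real.exp_pos _).le)
            (Real.rpow_nonneg (hφ0 x) _)
        have hbase2 : (0:ℝ) ≤ f x ^ (-(2*t)) * ‖gradient φ x‖ ^ (p*(2*t+1)) :=
          mul_nonneg (Real.rpow_nonneg hfpos.le _) (Real.rpow_nonneg (norm_nonneg _) _)
        have eq1 : F1 x = ENNReal.ofReal
            ((f x * Real.exp ((2*t+1)*u x) * φ x ^ (2*(k:ℝ))) ^ (2*t/(2*t+1))) := by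
          simp only [hF1def]
          rw [hτAx, ENNReal.ofReal_rpow_of_nonneg hbase1 hθ0]
        have eq2 : G1 x = ENNReal.ofReal
            ((f x ^ (-(2*t)) * ‖gradient φ x‖ ^ (p*(2*t+1))) ^ (1/(2*t+1))) := by
          simp only [hG1def]
          rw [ENNReal.ofReal_rpow_of_pos hfpos,
            ← ENNReal.ofReal_mul (Real.rpow_nonneg hfpos.le _),
            ENNReal.ofReal_rpow_of_nonneg hbase2 hδ0]
        rw [eq1, eq2, hτGx, ← ENNReal.ofReal_mul (Real.rpow_nonneg hbase1 _)]
        exact ENNReal.ofReal_le_ofReal hreal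
    have hGlin : (∫⁻ x in Ω, ENNReal.ofReal (τG x)) = ENNReal.ofReal IG := by
      rw [← ofReal_integral_eq_lintegral_ofReal hIG
        ((ae_restrict_iff' ms).mpr (ae_of_all _ (fun x _ => hτG0 x)))]
    have hAlin : (∫⁻ x in Ω, ENNReal.ofReal (τA x)) = ENNReal.ofReal IA := by
      rw [← ofReal_integral_eq_lintegral_ofReal hIA
        ((ae_restrict_iff' ms).mpr (ae_of_all _ hτA0))]
    have hF1int : (∫⁻ x in Ω, F1 x ^ ((2*t+1)/(2*t))) = ENNReal.ofReal IA := by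
      rw [lintegral_congr (fun a => eF1 a), hAlin]
    have hG1int : (∫⁻ x in Ω, G1 x ^ (2*t+1)) = R := by
      rw [lintegral_congr (fun a => eG1 a)]
    have hHold2 : ENNReal.ofReal IG ≤
        (ENNReal.ofReal IA) ^ (2*t/(2*t+1)) * R ^ (1/(2*t+1)) := by
      rw [← hGlin]
      calc (∫⁻ x in Ω, ENNReal.ofReal (τG x))
          ≤ ∫⁻ x in Ω, (F1 * G1) x := lintegral_mono_ae (hptH.mono (fun x hx => hx))
        _ ≤ (∫⁻ x in Ω, F1 x ^ ((2*t+1)/(2*t))) ^ (1/((2*t+1)/(2*t))) *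
            (∫⁻ x in Ω, G1 x ^ (2*t+1)) ^ (1/(2*t+1)) := hHold
        _ = (ENNReal.ofReal IA) ^ (2*t/(2*t+1)) * R ^ (1/(2*t+1)) := by
            rw [hF1int, hG1int, one_div_div]
    have hfinal : ENNReal.ofReal IA ≤ ENNReal.ofReal (M ^ (2*t+1)) * R := by
      have hIAM : ENNReal.ofReal IA ≤ ENNReal.ofReal M * ENNReal.ofReal IG := by
        rw [← ENNReal.ofReal_mul hM0.le]
        exact ENNReal.ofReal_le_ofReal hAM
      rcases eq_or_ne (ENNReal.ofReal IA) 0 with hz | hz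
      · rw [hz]; exact bot_le
      have hXtop : ENNReal.ofReal IA ≠ ⊤ := ENNReal.ofReal_lt_top.ne
      have hchain : ENNReal.ofReal IA ≤ ENNReal.ofReal M *
          ((ENNReal.ofReal IA) ^ (2*t/(2*t+1)) * R ^ (1/(2*t+1))) :=
        hIAM.trans (mul_le_mul_right hHold2 _)
      have hsplit : ENNReal.ofReal IA = (ENNReal.ofReal IA) ^ (2*t/(2*t+1)) *
          (ENNReal.ofReal IA) ^ (1/(2*t+1)) := by
        rw [← ENNReal.rpow_add _ _ hz hXtop, show 2*t/(2*t+1) + 1/(2*t+1) = 1 by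
          field_simp, ENNReal.rpow_one]
      have hθne : (ENNReal.ofReal IA) ^ (2*t/(2*t+1)) ≠ 0 := by
        rw [Ne, ENNReal.rpow_eq_zero_iff]
        push_neg
        exact ⟨fun h => absurd h hz, fun h => absurd h hXtop⟩
      have hθtop : (ENNReal.ofReal IA) ^ (2*t/(2*t+1)) ≠ ⊤ :=
        (ENNReal.rpow_lt_top_of_nonneg hθ0 hXtop).ne
      have hcan : (ENNReal.ofReal IA) ^ (1/(2*t+1)) ≤
          ENNReal.ofReal M * R ^ (1/(2*t+1)) := by
        have h2 : (ENNReal.ofReal IA) ^ (2*t/(2*t+1)) * (ENNReal.ofReal IA) ^ (1/(2*t+1))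
            ≤ (ENNReal.ofReal IA) ^ (2*t/(2*t+1)) *
              (ENNReal.ofReal M * R ^ (1/(2*t+1))) := by
          rw [← hsplit]
          calc ENNReal.ofReal IA ≤ ENNReal.ofReal M *
              ((ENNReal.ofReal IA) ^ (2*t/(2*t+1)) * R ^ (1/(2*t+1))) := hchain
            _ = (ENNReal.ofReal IA) ^ (2*t/(2*t+1)) *
                (ENNReal.ofReal M * R ^ (1/(2*t+1))) := by ring
        exact (ENNReal.mul_le_mul_iff_right hθne hθtop).mp h2
      have hpow := ENNReal.rpow_le_rpow hcan (by linarith : (0:ℝ) ≤ 2*t+1)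
      rw [← ENNReal.rpow_mul (ENNReal.ofReal IA),
        show (1/(2*t+1))*(2*t+1) = 1 by field_simp, ENNReal.rpow_one,
        ENNReal.mul_rpow_of_nonneg _ _ (by linarith : (0:ℝ) ≤ 2*t+1),
        ← ENNReal.rpow_mul R] at hpow
      rw [show (1/(2*t+1))*(2*t+1) = 1 by field_simp, ENNReal.rpow_one,
        ENNReal.ofReal_rpow_of_pos hM0] at hpow
      exact hpow
    exact step1.trans hfinal
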